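/- Let K ⊇ ℚ, and let A be a complete filtered K-algebra with a distinguished group-like invertible element η (i.e. Δη = η⊗̂η in the complete Hopf algebra structure) with η − 1 ∈ F₁A, so that log η = Σ_{n≥1} (−1)^{n−1}(η−1)ⁿ/n converges. Then for any a ∈ K the element η^a := exp(a·log η) is well defined, group-like, and satisfies η^a · η^b = η^{a+b} for all a, b ∈ K and η^1 = η. -/

import Mathlib

open Finset

/-- Convergence of a sequence `s` to `L` with respect to a decreasing filtration
`F` on an algebra. -/
def IsFilteredLimit {K A : Type*} [CommRing K] [Ring A] [Algebra K A]
    (F : ℕ → Submodule K A) (s : ℕ → A) (L : A) : Prop :=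
  ∀ n : ℕ, ∃ N : ℕ, ∀ m : ℕ, N ≤ m → s m - L ∈ F n

namespace GRP
open Polynomial

variable {K R : Type*} [CommRing K] [Ring R] [Algebra K R]

structure FD (F : ℕ → Submodule K R) : Prop where
  top : F 0 = ⊤
  anti : ∀ n, F (n + 1) ≤ F n
  mul : ∀ m n : ℕ, ∀ x y : R, x ∈ F m → y ∈ F n → x * y ∈ F (m + n)
  sep : ∀ x : R, (∀ n, x ∈ F n) → x = 0

variable {F : ℕ → Submodule K R}

theorem FD.mono (hF : FD F) {m n : ℕ} (h : m ≤ n) : F n ≤ F m := by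
  induction n with
  | zero => exact Nat.le_zero.mp h ▸ le_rfl
  | succ k ih =>
    rcases Nat.lt_or_ge m (k + 1) with h' | h'
    · exact (hF.anti k).trans (ih (Nat.lt_succ_iff.mp h'))
    · exact le_antisymm h h' ▸ le_rfl

theorem FD.mulL (hF : FD F) {n : ℕ} {x : R} (hx : x ∈ F n) (c : R) : c * x ∈ F n := by
  simpa using hF.mul 0 n c x (by simp [hF.top]) hx

theorem FD.mulR (hF : FD F) {n : ℕ} {x : R} (hx : x ∈ F n) (c : R) : x * c ∈ F n := by
  simpa using hF.mul n 0 x c hx (by simp [hF.top])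

theorem FD.pow_mem (hF : FD F) {x : R} (hx : x ∈ F 1) : ∀ n, x ^ n ∈ F n
  | 0 => by simp [hF.top]
  | n + 1 => by rw [pow_succ]; exact hF.mul n 1 _ _ (hF.pow_mem hx n) hx

theorem FD.lim_unique (hF : FD F) {s : ℕ → R} {L L' : R}
    (h1 : IsFilteredLimit F s L) (h2 : IsFilteredLimit F s L') : L = L' := by
  have key : ∀ n, L - L' ∈ F n := by
    intro n
    obtain ⟨N1, h1⟩ := h1 n
    obtain ⟨N2, h2⟩ := h2 n
    have e : L - L' = (s (max N1 N2) - L') - (s (max N1 N2) - L) := by abel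
    rw [e]
    exact sub_mem (h2 _ (le_max_right _ _)) (h1 _ (le_max_left _ _))
  exact sub_eq_zero.mp (hF.sep _ key)

theorem FD.lim_mul (hF : FD F) {s t : ℕ → R} {u v : R}
    (hs : IsFilteredLimit F s u) (ht : IsFilteredLimit F t v) :
    IsFilteredLimit F (fun N => s N * t N) (u * v) := by
  intro n
  obtain ⟨N1, h1⟩ := hs n
  obtain ⟨N2, h2⟩ := ht n
  refine ⟨max N1 N2, fun m hm => ?_⟩
  have e : s m * t m - u * v = (s m - u) * t m + u * (t m - v) := by
    rw [sub_mul, mul_sub]; abel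
  rw [e]
  exact add_mem (hF.mulR (h1 m (le_trans (le_max_left _ _) hm)) _)
    (hF.mulL (h2 m (le_trans (le_max_right _ _) hm)) _)

theorem FD.lim_tail (hF : FD F) {s s' : ℕ → R} {L : R}
    (hs : IsFilteredLimit F s L) (h : ∀ N, s' N - s N ∈ F (N + 1)) :
    IsFilteredLimit F s' L := by
  intro n
  obtain ⟨N1, h1⟩ := hs n
  refine ⟨max N1 n, fun m hm => ?_⟩
  have e : s' m - L = (s' m - s m) + (s m - L) := by abel
  rw [e]
  refine add_mem (hF.mono ?_ (h m)) (h1 m (le_trans (le_max_left _ _) hm))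
  have : n ≤ m := le_trans (le_max_right _ _) hm
  omega

theorem FD.lim_sub_partial (hF : FD F) {s : ℕ → R} {L : R}
    (hd : ∀ M, s (M + 1) - s M ∈ F (M + 1)) (hs : IsFilteredLimit F s L) (N : ℕ) :
    L - s N ∈ F (N + 1) := by
  have key : ∀ M, N ≤ M → s M - s N ∈ F (N + 1) := by
    intro M hM
    induction M with
    | zero =>
      have : N = 0 := Nat.le_zero.mp hM
      simp [this]
    | succ k ih =>
      rcases Nat.lt_or_ge N (k + 1) with h' | h'
      · have hNk : N ≤ k := Nat.lt_succ_iff.mp h'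
        have e : s (k + 1) - s N = (s (k + 1) - s k) + (s k - s N) := by abel
        rw [e]
        exact add_mem (hF.mono (by omega) (hd k)) (ih hNk)
      · have : N = k + 1 := le_antisymm hM h'
        simp [this]
  obtain ⟨N1, h1⟩ := hs (N + 1)
  have e : L - s N = -(s (max N N1) - L) + (s (max N N1) - s N) := by abel
  rw [e]
  exact add_mem (neg_mem (h1 _ (le_max_right _ _))) (key _ (le_max_left _ _))

theorem lim_map {R' : Type*} [Ring R'] [Algebra K R'] {G : ℕ → Submodule K R'}
    (φ : R →+* R') (hφ : ∀ n : ℕ, ∀ x, x ∈ F n → φ x ∈ G n) {s : ℕ → R} {L : R}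
    (hs : IsFilteredLimit F s L) : IsFilteredLimit G (fun N => φ (s N)) (φ L) := by
  intro n
  obtain ⟨N1, h1⟩ := hs n
  exact ⟨N1, fun m hm => by rw [← map_sub]; exact hφ n _ (h1 m hm)⟩

theorem FD.commute_lim (hF : FD F) {s : ℕ → R} {L : R} (hs : IsFilteredLimit F s L)
    {c : R} (hc : ∀ N, Commute c (s N)) : Commute c L := by
  have key : ∀ n, c * L - L * c ∈ F n := by
    intro n
    obtain ⟨N1, h1⟩ := hs n
    have e : c * L - L * c = -(c * (s N1 - L)) + (s N1 - L) * c
        + (c * s N1 - s N1 * c) := by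
      rw [mul_sub, sub_mul]; abel
    rw [e, (hc N1).eq, sub_self, add_zero]
    exact add_mem (neg_mem (hF.mulL (h1 N1 le_rfl) c)) (hF.mulR (h1 N1 le_rfl) c)
  have := hF.sep _ key
  exact sub_eq_zero.mp this



variable (ρ : ℚ →+* R)

noncomputable def eSeq (x : R) (N : ℕ) : R :=
  ∑ k ∈ Finset.range (N + 1), ρ (1 / (Nat.factorial k)) * x ^ k

noncomputable def lSeq (x : R) (N : ℕ) : R :=
  ∑ n ∈ Finset.Icc 1 N, ρ ((-1) ^ (n + 1) / n) * x ^ n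

variable {ρ}

theorem eSeq_succ (x : R) (N : ℕ) :
    eSeq ρ x (N + 1) = eSeq ρ x N + ρ (1 / (Nat.factorial (N + 1))) * x ^ (N + 1) :=
  Finset.sum_range_succ _ _

theorem lSeq_succ (x : R) (N : ℕ) :
    lSeq ρ x (N + 1) = lSeq ρ x N + ρ ((-1) ^ (N + 1 + 1) / ((N + 1 : ℕ) : ℚ)) * x ^ (N + 1) := by
  unfold lSeq
  rw [← Finset.insert_Icc_right_eq_Icc_add_one (a := 1) (b := N) (by omega), Finset.sum_insert (by simp), add_comm]

theorem FD.eSeq_diff (hF : FD F) {x : R} (hx : x ∈ F 1) (N : ℕ) :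
    eSeq ρ x (N + 1) - eSeq ρ x N ∈ F (N + 1) := by
  rw [eSeq_succ, add_sub_cancel_left]
  exact hF.mulL (hF.pow_mem hx (N + 1)) _

theorem FD.lSeq_diff (hF : FD F) {x : R} (hx : x ∈ F 1) (N : ℕ) :
    lSeq ρ x (N + 1) - lSeq ρ x N ∈ F (N + 1) := by
  rw [lSeq_succ, add_sub_cancel_left]
  exact hF.mulL (hF.pow_mem hx (N + 1)) _

theorem lSeq_zero (x : R) : lSeq ρ x 0 = 0 := by simp [lSeq]

theorem eSeq_zero (x : R) : eSeq ρ x 0 = 1 := by simp [eSeq]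

theorem FD.pow_sub_mem (hF : FD F) {x y : R} {m : ℕ} (h : x - y ∈ F m) :
    ∀ k, x ^ (k + 1) - y ^ (k + 1) ∈ F m
  | 0 => by simpa using h
  | k + 1 => by
    have e : x ^ (k + 2) - y ^ (k + 2)
        = x * (x ^ (k + 1) - y ^ (k + 1)) + (x - y) * y ^ (k + 1) := by
      rw [mul_sub, sub_mul, ← pow_succ', ← pow_succ']
      abel
    rw [e]
    exact add_mem (hF.mulL (hF.pow_sub_mem h k) x) (hF.mulR h _)

theorem FD.eSeq_sub (hF : FD F) {x y : R} {m : ℕ} (h : x - y ∈ F m) (N : ℕ) :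
    eSeq ρ x N - eSeq ρ y N ∈ F m := by
  unfold eSeq
  rw [← Finset.sum_sub_distrib]
  refine Submodule.sum_mem _ fun k _ => ?_
  rw [← mul_sub]
  cases k with
  | zero => simp
  | succ k => exact hF.mulL (hF.pow_sub_mem h k) _

theorem FD.lSeq_sub (hF : FD F) {x y : R} {m : ℕ} (h : x - y ∈ F m) (N : ℕ) :
    lSeq ρ x N - lSeq ρ y N ∈ F m := by
  unfold lSeq
  rw [← Finset.sum_sub_distrib]
  refine Submodule.sum_mem _ fun n hn => ?_
  rw [← mul_sub]
  obtain ⟨k, rfl⟩ : ∃ k, n = k + 1 := ⟨n - 1, by have := (Finset.mem_Icc.mp hn).1; omega⟩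
  exact hF.mulL (hF.pow_sub_mem h k) _


/-! ### Polynomials -/

noncomputable def eP (N : ℕ) : ℚ[X] :=
  ∑ k ∈ Finset.range (N + 1), monomial k ((1 : ℚ) / k.factorial)

noncomputable def lP (N : ℕ) : ℚ[X] :=
  ∑ n ∈ Finset.Icc 1 N, monomial n ((-1 : ℚ) ^ (n + 1) / n)

theorem eval₂_eP (x : R) (N : ℕ) : eval₂ ρ x (eP N) = eSeq ρ x N := by
  rw [eP, eval₂_finset_sum]
  exact Finset.sum_congr rfl fun k _ => eval₂_monomial _ _

theorem eval₂_lP (x : R) (N : ℕ) : eval₂ ρ x (lP N) = lSeq ρ x N := by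
  rw [lP, eval₂_finset_sum]
  exact Finset.sum_congr rfl fun k _ => eval₂_monomial _ _

theorem coeff_eP (N k : ℕ) :
    (eP N).coeff k = if k ≤ N then (1 : ℚ) / k.factorial else 0 := by
  simp [eP, finset_sum_coeff, coeff_monomial, Finset.sum_ite_eq', Finset.mem_range,
    Nat.lt_succ_iff]

theorem coeff_lP (N k : ℕ) :
    (lP N).coeff k = if 1 ≤ k ∧ k ≤ N then (-1 : ℚ) ^ (k + 1) / k else 0 := by
  simp [lP, finset_sum_coeff, coeff_monomial, Finset.sum_ite_eq', Finset.mem_Icc]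

theorem eP_coeff_zero (N : ℕ) : (eP N).coeff 0 = 1 := by simp [coeff_eP]

theorem lP_coeff_zero (N : ℕ) : (lP N).coeff 0 = 0 := by simp [coeff_lP]

theorem X_dvd_lP (N : ℕ) : (X : ℚ[X]) ∣ lP N := X_dvd_iff.mpr (lP_coeff_zero N)

theorem X_dvd_eP_sub_one (N : ℕ) : (X : ℚ[X]) ∣ (eP N - 1) :=
  X_dvd_iff.mpr (by simp [coeff_eP])

theorem derivative_eP (N : ℕ) :
    derivative (eP N) = eP N - monomial N ((1 : ℚ) / N.factorial) := by
  have h1 : ∀ k : ℕ, ((1 : ℚ) / (k + 1).factorial) * ((k + 1 : ℕ) : ℚ) = 1 / k.factorial := by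
    intro k
    have hf : (((k + 1).factorial : ℚ)) = ((k + 1 : ℕ) : ℚ) * k.factorial := by
      rw [Nat.factorial_succ]; push_cast; ring
    have hk : (k.factorial : ℚ) ≠ 0 := Nat.cast_ne_zero.mpr (Nat.factorial_ne_zero k)
    have hk1 : ((k + 1 : ℕ) : ℚ) ≠ 0 := Nat.cast_ne_zero.mpr (Nat.succ_ne_zero k)
    field_simp [hf]
    exact hf.symm
  calc derivative (eP N)
      = ∑ k ∈ Finset.range (N + 1), monomial (k - 1) ((1 : ℚ) / k.factorial * k) := by
        rw [eP, derivative_sum]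
        exact Finset.sum_congr rfl fun k _ => derivative_monomial _ _
    _ = ∑ k ∈ Finset.range N, monomial k ((1 : ℚ) / k.factorial) := by
        rw [Finset.sum_range_succ']
        simp only [Nat.add_sub_cancel, Nat.cast_zero, mul_zero, monomial_zero_right, add_zero,
          Nat.zero_sub]
        exact Finset.sum_congr rfl fun k _ => by rw [show ((k + 1 : ℕ) : ℚ) = ((k+1 : ℕ) : ℚ) from rfl, h1 k]
    _ = eP N - monomial N ((1 : ℚ) / N.factorial) := by
        rw [eP, Finset.sum_range_succ]; abel

theorem neg_X_pow (m : ℕ) : ((-X : ℚ[X])) ^ m = monomial m ((-1 : ℚ) ^ m) := by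
  have : (-X : ℚ[X]) = C (-1) * X := by simp
  rw [this, mul_pow, ← C_pow, C_mul_X_pow_eq_monomial]

theorem derivative_lP (N : ℕ) :
    derivative (lP N) = ∑ m ∈ Finset.range N, (-X : ℚ[X]) ^ m := by
  calc derivative (lP N)
      = ∑ n ∈ Finset.Icc 1 N, monomial (n - 1) ((-1 : ℚ) ^ (n + 1) / n * n) := by
        rw [lP, derivative_sum]
        exact Finset.sum_congr rfl fun n _ => derivative_monomial _ _
    _ = ∑ m ∈ Finset.range N, (-X : ℚ[X]) ^ m := by
        refine Finset.sum_nbij' (fun n => n - 1) (fun m => m + 1) ?_ ?_ ?_ ?_ ?_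
        · intro n hn
          rw [Finset.mem_Icc] at hn
          rw [Finset.mem_range]
          omega
        · intro m hm
          rw [Finset.mem_range] at hm
          rw [Finset.mem_Icc]
          omega
        · intro n hn
          rw [Finset.mem_Icc] at hn
          omega
        · intro m _
          omega
        · intro n hn
          rw [Finset.mem_Icc] at hn
          obtain ⟨m, rfl⟩ : ∃ m, n = m + 1 := ⟨n - 1, by omega⟩
          rw [neg_X_pow]
          simp only [Nat.add_sub_cancel]
          congr 1
          have hm1 : ((m + 1 : ℕ) : ℚ) ≠ 0 := Nat.cast_ne_zero.mpr (by omega)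
          have h2 : (-1 : ℚ) ^ (m + 1 + 1) = (-1 : ℚ) ^ m := by
            rw [pow_add, pow_one, pow_succ]; ring
          rw [h2]
          exact div_mul_cancel₀ _ hm1

theorem key1 (N : ℕ) :
    (1 + X) * derivative (lP N) = 1 - (-X : ℚ[X]) ^ N := by
  rw [derivative_lP]
  have h := geom_sum_mul (-X : ℚ[X]) N
  linear_combination -h

theorem eval₂_comp' {x : R} (hx : ∀ c : ℚ, Commute (ρ c) x) (p q : ℚ[X]) :
    eval₂ ρ x (p.comp q) = eval₂ ρ (eval₂ ρ x q) p := by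
  induction p using Polynomial.induction_on' with
  | add u v hu hv => rw [add_comp, eval₂_add, eval₂_add, hu, hv]
  | monomial n a =>
    rw [monomial_comp, eval₂_monomial]
    calc eval₂ ρ x (C a * q ^ n)
        = (eval₂RingHom' ρ x hx) (C a * q ^ n) := rfl
      _ = (eval₂RingHom' ρ x hx) (C a) * ((eval₂RingHom' ρ x hx) q) ^ n := by
          rw [map_mul, map_pow]
      _ = ρ a * (eval₂ ρ x q) ^ n := by
          simp [eval₂RingHom', eval₂_C]

theorem FD.eval₂_low (hF : FD F) {x : R} (hx : x ∈ F 1) {p : ℚ[X]} {N : ℕ}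
    (hp : ∀ k, k ≤ N → p.coeff k = 0) : eval₂ ρ x p ∈ F (N + 1) := by
  rw [eval₂_eq_sum, Polynomial.sum_def]
  refine Submodule.sum_mem _ fun n hn => ?_
  by_cases h : n ≤ N
  · rw [hp n h]
    simp
  · exact hF.mulL (hF.mono (by omega) (hF.pow_mem hx n)) _

theorem coeff_low_of_X_pow_dvd {p : ℚ[X]} {N k : ℕ} (h : (X : ℚ[X]) ^ N ∣ p)
    (hk : k < N) : p.coeff k = 0 := by
  obtain ⟨r, rfl⟩ := h
  rw [mul_comm, coeff_mul_X_pow']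
  simp [Nat.not_le_of_lt hk]

theorem claim1 (N : ℕ) : ∀ k, k ≤ N →
    ((eP N).comp (lP N)).coeff k = if k ≤ 1 then 1 else 0 := by
  set c : ℚ := (1 : ℚ) / N.factorial with hc
  set p : ℚ[X] := (eP N).comp (lP N) with hp
  -- the ODE-style relation
  have hder : (1 + X) * derivative p
      = (1 - (-X : ℚ[X]) ^ N) * (p - C c * lP N ^ N) := by
    have h1 : derivative p = derivative (lP N) * (derivative (eP N)).comp (lP N) :=
      derivative_comp _ _
    have h2 : (derivative (eP N)).comp (lP N) = p - C c * lP N ^ N := by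
      rw [derivative_eP, sub_comp, monomial_comp, hp]
    rw [h1, h2, ← mul_assoc, key1]
  have hJ : ∀ k, k < N → ((1 + X) * derivative p - p).coeff k = 0 := by
    intro k hk
    refine coeff_low_of_X_pow_dvd ?_ hk
    have e : (1 + X) * derivative p - p
        = -((-X : ℚ[X]) ^ N * p) - (1 - (-X : ℚ[X]) ^ N) * (C c * lP N ^ N) := by
      rw [hder]; ring
    rw [e]
    have d1 : (X : ℚ[X]) ^ N ∣ (-X : ℚ[X]) ^ N := by
      have : (-X : ℚ[X]) ^ N = X ^ N * (-1 : ℚ[X]) ^ N := by rw [← mul_pow]; ring_nf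
      exact ⟨(-1 : ℚ[X]) ^ N, this⟩
    have d2 : (X : ℚ[X]) ^ N ∣ lP N ^ N := pow_dvd_pow_of_dvd (X_dvd_lP N) N
    exact dvd_sub (dvd_neg.mpr (d1.mul_right _)) ((d2.mul_left _).mul_left _)
  have hrec : ∀ k, k < N →
      ((k : ℚ) + 1) * p.coeff (k + 1) = (1 - (k : ℚ)) * p.coeff k := by
    intro k hk
    have h0 := hJ k hk
    rw [coeff_sub, sub_eq_zero, add_mul, one_mul, coeff_add, coeff_derivative] at h0
    cases k with
    | zero =>
      rw [mul_coeff_zero, coeff_X_zero, zero_mul, add_zero] at h0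
      push_cast at h0 ⊢
      linear_combination h0
    | succ m =>
      rw [coeff_X_mul, coeff_derivative] at h0
      push_cast at h0 ⊢
      linear_combination h0
  have h0 : p.coeff 0 = 1 := by
    rw [coeff_zero_eq_eval_zero, hp, eval_comp, ← coeff_zero_eq_eval_zero,
      lP_coeff_zero, ← coeff_zero_eq_eval_zero]
    exact eP_coeff_zero N
  intro k
  induction k with
  | zero => intro _; simpa using h0
  | succ m ih =>
    intro hm
    have hrm := hrec m (by omega)
    have hmN : m ≤ N := by omega
    have ihm := ih hmN
    have hne : ((m : ℚ) + 1) ≠ 0 := by positivity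
    cases m with
    | zero =>
      simp only [Nat.cast_zero] at hrm
      rw [ihm] at hrm
      simp only [if_pos (by omega : (0:ℕ) ≤ 1)] at hrm
      have : p.coeff 1 = 1 := by linarith
      simpa using this
    | succ m' =>
      have hz : p.coeff (m' + 1 + 1) = 0 := by
        rcases Nat.eq_zero_or_pos m' with h' | h'
        · subst h'
          rw [ihm] at hrm
          simp only [if_pos (by omega : (1:ℕ) ≤ 1)] at hrm
          push_cast at hrm
          linarith
        · rw [ihm] at hrm
          rw [if_neg (by omega)] at hrm
          have := hrm
          rw [mul_zero] at this
          rcases mul_eq_zero.mp this with h'' | h''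
          · exact absurd h'' (by push_cast; positivity)
          · exact h''
      rw [hz, if_neg (by omega : ¬ (m' + 1 + 1 ≤ 1))]

theorem claim2 (N : ℕ) : ∀ k, k ≤ N →
    ((lP N).comp (eP N - 1)).coeff k = if k = 1 then 1 else 0 := by
  set c : ℚ := (1 : ℚ) / N.factorial with hc
  set q : ℚ[X] := (lP N).comp (eP N - 1) with hqdef
  have hq0 : q.coeff 0 = 0 := by
    have h1 : (eP N - 1).eval 0 = 0 := by
      rw [← coeff_zero_eq_eval_zero]
      simp [coeff_eP]
    rw [coeff_zero_eq_eval_zero, hqdef, eval_comp, h1, ← coeff_zero_eq_eval_zero,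
      lP_coeff_zero]
  have hXq : (X : ℚ[X]) ∣ (eP N - 1) := X_dvd_eP_sub_one N
  have hkey : eP N * (derivative (lP N)).comp (eP N - 1) = 1 - (-(eP N - 1)) ^ N := by
    have h := congrArg (fun P : ℚ[X] => P.comp (eP N - 1)) (key1 N)
    simp only [mul_comp, add_comp, one_comp, X_comp, sub_comp, pow_comp, neg_comp] at h
    linear_combination h
  have hder : eP N * derivative q = derivative (eP N) * (1 - (-(eP N - 1)) ^ N) := by
    have h1 : derivative q = derivative (eP N) * (derivative (lP N)).comp (eP N - 1) := by
      rw [hqdef, derivative_comp, derivative_sub, derivative_one, sub_zero]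
    linear_combination eP N * h1 + derivative (eP N) * hkey
  have hJ2 : ∀ k, k < N → (eP N * derivative q).coeff k = (eP N).coeff k := by
    intro k hk
    have e : eP N * derivative q - eP N
        = -(monomial N c) - derivative (eP N) * (-(eP N - 1)) ^ N := by
      rw [hder, derivative_eP]
      ring
    have hdvd : (X : ℚ[X]) ^ N ∣ (eP N * derivative q - eP N) := by
      rw [e]
      have d1 : (X : ℚ[X]) ^ N ∣ monomial N c := ⟨C c, by rw [← C_mul_X_pow_eq_monomial]; ring⟩
      have d2 : (X : ℚ[X]) ^ N ∣ (-(eP N - 1)) ^ N :=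
        pow_dvd_pow_of_dvd (dvd_neg.mpr hXq) N
      exact dvd_sub (dvd_neg.mpr d1) (d2.mul_left _)
    have h0 := coeff_low_of_X_pow_dvd hdvd hk
    rw [coeff_sub, sub_eq_zero] at h0
    exact h0
  intro k
  induction k using Nat.strong_induction_on with
  | _ k ih =>
    intro hk
    match k with
    | 0 => simpa using hq0
    | (m + 1) =>
      have hm : m < N := by omega
      have hrel0 := hJ2 m hm
      rw [coeff_mul, Finset.Nat.sum_antidiagonal_eq_sum_range_succ_mk,
        coeff_eP, if_pos (le_of_lt hm)] at hrel0
      have hrel : ∑ i ∈ Finset.range (m + 1),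
          (eP N).coeff i * (derivative q).coeff (m - i) = 1 / (m.factorial : ℚ) := hrel0
      rw [Finset.sum_range_succ'] at hrel
      have hsum : ∑ i ∈ Finset.range m,
          (eP N).coeff (i + 1) * (derivative q).coeff (m - (i + 1))
          = if 1 ≤ m then 1 / (m.factorial : ℚ) else 0 := by
        have hterm : ∀ i ∈ Finset.range m,
            (eP N).coeff (i + 1) * (derivative q).coeff (m - (i + 1))
            = if i = m - 1 then 1 / (m.factorial : ℚ) else 0 := by
          intro i hi
          have him : i < m := Finset.mem_range.mp hi
          rw [coeff_derivative]
          have e1 : m - (i + 1) + 1 = m - i := by omega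
          rw [e1, ih (m - i) (by omega) (by omega), coeff_eP,
            if_pos (by omega : i + 1 ≤ N)]
          by_cases hcase : i = m - 1
          · have e2 : m - (i + 1) = 0 := by omega
            have e3 : i + 1 = m := by omega
            rw [if_pos hcase, if_pos (by omega : m - i = 1), e2, e3]
            norm_num
          · rw [if_neg hcase, if_neg (by omega : ¬m - i = 1)]
            ring
        rw [Finset.sum_congr rfl hterm, Finset.sum_ite_eq' (Finset.range m) (m - 1)]
        by_cases h1m : 1 ≤ m
        · rw [if_pos (Finset.mem_range.mpr (by omega)), if_pos h1m]
        · rw [if_neg (by rw [Finset.mem_range]; omega), if_neg h1m]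
      rw [hsum, Nat.sub_zero, eP_coeff_zero, one_mul, coeff_derivative] at hrel
      rcases Nat.eq_zero_or_pos m with hm0 | hm1
      · subst hm0
        rw [if_pos rfl]
        rw [if_neg (by omega)] at hrel
        norm_num [Nat.factorial] at hrel ⊢
        linarith
      · rw [if_neg (by omega)]
        rw [if_pos (by omega : 1 ≤ m)] at hrel
        have hz : q.coeff (m + 1) * ((m : ℚ) + 1) = 0 := by linarith
        rcases mul_eq_zero.mp hz with h'' | h''
        · exact h''
        · exact absurd h'' (by positivity)

theorem FD.exp_add_trunc (hF : FD F) {x y : R} (hx : x ∈ F 1) (hy : y ∈ F 1)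
    (hxy : Commute x y) (hqx : ∀ c : ℚ, Commute (ρ c) x)
    (hqy : ∀ c : ℚ, Commute (ρ c) y) (N : ℕ) :
    eSeq ρ x N * eSeq ρ y N - eSeq ρ (x + y) N ∈ F (N + 1) := by
  classical
  set g : ℕ → ℕ → R :=
    fun i j => (ρ ((1 : ℚ) / i.factorial) * x ^ i) * (ρ ((1 : ℚ) / j.factorial) * y ^ j)
    with hg
  have hterm : ∀ k, ρ ((1 : ℚ) / k.factorial) * (x + y) ^ k
      = ∑ i ∈ Finset.range (k + 1), g i (k - i) := by
    intro k
    rw [hxy.add_pow, Finset.mul_sum]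
    refine Finset.sum_congr rfl fun i hi => ?_
    have hik : i ≤ k := Nat.lt_succ_iff.mp (Finset.mem_range.mp hi)
    have hfi : (i.factorial : ℚ) ≠ 0 := Nat.cast_ne_zero.mpr (Nat.factorial_ne_zero i)
    have hfj : ((k - i).factorial : ℚ) ≠ 0 := Nat.cast_ne_zero.mpr (Nat.factorial_ne_zero _)
    have hcoef : (1 : ℚ) / k.factorial * (k.choose i : ℚ)
        = 1 / i.factorial * (1 / (k - i).factorial) := by
      rw [Nat.cast_choose ℚ hik]
      have hfk : (k.factorial : ℚ) ≠ 0 := Nat.cast_ne_zero.mpr (Nat.factorial_ne_zero k)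
      field_simp
    have hcc : ((k.choose i : ℕ) : R) = ρ ((k.choose i : ℚ)) := (map_natCast ρ _).symm
    have h1 : Commute (ρ ((k.choose i : ℚ))) (x ^ i * y ^ (k - i)) :=
      ((hqx _).pow_right i).mul_right ((hqy _).pow_right (k - i))
    have h2 : Commute (ρ ((1 : ℚ) / (k - i).factorial)) (x ^ i) := (hqx _).pow_right i
    calc ρ ((1 : ℚ) / k.factorial) * (x ^ i * y ^ (k - i) * ((k.choose i : ℕ) : R))
        = ρ ((1 : ℚ) / k.factorial) * (ρ ((k.choose i : ℚ)) * (x ^ i * y ^ (k - i))) := by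
          rw [hcc, ← h1.eq]
      _ = ρ ((1 : ℚ) / k.factorial * (k.choose i : ℚ)) * (x ^ i * y ^ (k - i)) := by
          rw [← mul_assoc, ← map_mul]
      _ = (ρ ((1 : ℚ) / i.factorial) * ρ ((1 : ℚ) / (k - i).factorial))
            * (x ^ i * y ^ (k - i)) := by rw [hcoef, map_mul]
      _ = g i (k - i) := by rw [hg]; exact Commute.mul_mul_mul_comm h2 _ _
  set T : Finset (ℕ × ℕ) :=
    (Finset.range (N + 1) ×ˢ Finset.range (N + 1)).filter (fun p => p.1 + p.2 ≤ N) with hT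
  have htri : eSeq ρ (x + y) N = ∑ p ∈ T, g p.1 p.2 := by
    rw [eSeq]
    rw [Finset.sum_congr rfl fun k _ => hterm k]
    rw [Finset.sum_sigma']
    refine Finset.sum_nbij' (fun a => (a.2, a.1 - a.2)) (fun p => ⟨p.1 + p.2, p.1⟩)
      ?_ ?_ ?_ ?_ (fun a _ => rfl)
    · intro a ha
      rw [Finset.mem_sigma, Finset.mem_range, Finset.mem_range] at ha
      rw [hT, Finset.mem_filter, Finset.mem_product, Finset.mem_range, Finset.mem_range]
      dsimp only
      omega
    · intro p hp
      rw [hT, Finset.mem_filter, Finset.mem_product, Finset.mem_range, Finset.mem_range] at hp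
      rw [Finset.mem_sigma, Finset.mem_range, Finset.mem_range]
      dsimp only
      omega
    · intro a ha
      rw [Finset.mem_sigma, Finset.mem_range, Finset.mem_range] at ha
      obtain ⟨k, i⟩ := a
      dsimp only at ha ⊢
      have hki : i + (k - i) = k := by omega
      rw [hki]
    · intro p hp
      rw [hT, Finset.mem_filter] at hp
      obtain ⟨i, j⟩ := p
      dsimp only
      rw [Nat.add_sub_cancel_left]
  have hsq : eSeq ρ x N * eSeq ρ y N
      = ∑ p ∈ Finset.range (N + 1) ×ˢ Finset.range (N + 1), g p.1 p.2 := by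
    rw [eSeq, eSeq, Finset.sum_mul_sum, Finset.sum_product]
  have hsplit := Finset.sum_filter_add_sum_filter_not
    (Finset.range (N + 1) ×ˢ Finset.range (N + 1)) (fun p => p.1 + p.2 ≤ N)
    (fun p => g p.1 p.2)
  have e : eSeq ρ x N * eSeq ρ y N - eSeq ρ (x + y) N
      = ∑ p ∈ (Finset.range (N + 1) ×ˢ Finset.range (N + 1)).filter
          (fun p => ¬ p.1 + p.2 ≤ N), g p.1 p.2 := by
    rw [hsq, htri, hT, ← hsplit]
    abel
  rw [e]
  refine Submodule.sum_mem _ fun p hp => ?_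
  rw [Finset.mem_filter] at hp
  have hN : N + 1 ≤ p.1 + p.2 := by omega
  refine hF.mono hN ?_
  exact hF.mul p.1 p.2 _ _ (hF.mulL (hF.pow_mem hx p.1) _) (hF.mulL (hF.pow_mem hy p.2) _)

theorem FD.exp_add_lim (hF : FD F) {x y u v : R} (hx : x ∈ F 1) (hy : y ∈ F 1)
    (hxy : Commute x y) (hqx : ∀ c : ℚ, Commute (ρ c) x)
    (hqy : ∀ c : ℚ, Commute (ρ c) y)
    (hu : IsFilteredLimit F (eSeq ρ x) u) (hv : IsFilteredLimit F (eSeq ρ y) v) :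
    IsFilteredLimit F (eSeq ρ (x + y)) (u * v) := by
  refine hF.lim_tail (hF.lim_mul hu hv) fun N => ?_
  have h := hF.exp_add_trunc hx hy hxy hqx hqy N
  rw [show eSeq ρ (x + y) N - eSeq ρ x N * eSeq ρ y N
      = -(eSeq ρ x N * eSeq ρ y N - eSeq ρ (x + y) N) from by abel]
  exact neg_mem h

theorem FD.lim_lSeq_mem (hF : FD F) {x L : R} (hx : x ∈ F 1)
    (hL : IsFilteredLimit F (lSeq ρ x) L) : L ∈ F 1 := by
  have h := hF.lim_sub_partial (fun M => hF.lSeq_diff hx M) hL 0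
  simpa [lSeq_zero] using h

theorem FD.lim_eSeq_sub_one_mem (hF : FD F) {x E : R} (hx : x ∈ F 1)
    (hE : IsFilteredLimit F (eSeq ρ x) E) : E - 1 ∈ F 1 := by
  have h := hF.lim_sub_partial (fun M => hF.eSeq_diff hx M) hE 0
  simpa [eSeq_zero] using h

theorem FD.exp_log (hF : FD F) {x L E : R} (hx : x ∈ F 1)
    (hqx : ∀ c : ℚ, Commute (ρ c) x)
    (hL : IsFilteredLimit F (lSeq ρ x) L) (hE : IsFilteredLimit F (eSeq ρ L) E) :
    E = 1 + x := by
  have key : ∀ M, eSeq ρ L M - (1 + x) ∈ F (M + 1) := by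
    intro M
    have h1 : L - lSeq ρ x M ∈ F (M + 1) :=
      hF.lim_sub_partial (fun M' => hF.lSeq_diff hx M') hL M
    have h2 : eSeq ρ L M - eSeq ρ (lSeq ρ x M) M ∈ F (M + 1) := hF.eSeq_sub h1 M
    have h3 : eSeq ρ (lSeq ρ x M) M = eval₂ ρ x ((eP M).comp (lP M)) := by
      rw [eval₂_comp' hqx, eval₂_lP, eval₂_eP]
    have h4 : eval₂ ρ x ((eP M).comp (lP M) - (1 + X)) ∈ F (M + 1) := by
      refine hF.eval₂_low hx fun k hk => ?_
      rw [coeff_sub, claim1 M k hk, coeff_add, coeff_one, coeff_X]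
      split_ifs <;> first | omega | norm_num
    have h5 : eval₂ ρ x ((1 : ℚ[X]) + X) = 1 + x := by
      rw [eval₂_add, eval₂_one, eval₂_X]
    have e : eSeq ρ L M - (1 + x)
        = (eSeq ρ L M - eSeq ρ (lSeq ρ x M) M)
          + eval₂ ρ x ((eP M).comp (lP M) - (1 + X)) := by
      rw [eval₂_sub, h5, ← h3]
      abel
    rw [e]
    exact add_mem h2 h4
  have hlim : IsFilteredLimit F (eSeq ρ L) (1 + x) := fun n =>
    ⟨n, fun m hm => hF.mono (by omega) (key m)⟩
  exact hF.lim_unique hE hlim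

theorem FD.log_exp (hF : FD F) {y E W : R} (hy : y ∈ F 1)
    (hqy : ∀ c : ℚ, Commute (ρ c) y)
    (hE : IsFilteredLimit F (eSeq ρ y) E)
    (hW : IsFilteredLimit F (lSeq ρ (E - 1)) W) : W = y := by
  have key : ∀ M, lSeq ρ (E - 1) M - y ∈ F (M + 1) := by
    intro M
    have h1 : E - eSeq ρ y M ∈ F (M + 1) :=
      hF.lim_sub_partial (fun M' => hF.eSeq_diff hy M') hE M
    have h1' : (E - 1) - (eSeq ρ y M - 1) ∈ F (M + 1) := by
      rw [sub_sub_sub_cancel_right]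
      exact h1
    have h2 : lSeq ρ (E - 1) M - lSeq ρ (eSeq ρ y M - 1) M ∈ F (M + 1) :=
      hF.lSeq_sub h1' M
    have h3 : lSeq ρ (eSeq ρ y M - 1) M = eval₂ ρ y ((lP M).comp (eP M - 1)) := by
      rw [eval₂_comp' hqy, eval₂_sub, eval₂_eP, eval₂_one, eval₂_lP]
    have h4 : eval₂ ρ y ((lP M).comp (eP M - 1) - X) ∈ F (M + 1) := by
      refine hF.eval₂_low hy fun k hk => ?_
      rw [coeff_sub, claim2 M k hk, coeff_X]
      split_ifs <;> first | omega | norm_num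
    have e : lSeq ρ (E - 1) M - y
        = (lSeq ρ (E - 1) M - lSeq ρ (eSeq ρ y M - 1) M)
          + eval₂ ρ y ((lP M).comp (eP M - 1) - X) := by
      rw [eval₂_sub, eval₂_X, ← h3]
      abel
    rw [e]
    exact add_mem h2 h4
  have hlim : IsFilteredLimit F (lSeq ρ (E - 1)) y := fun n =>
    ⟨n, fun m hm => hF.mono (by omega) (key m)⟩
  exact hF.lim_unique hW hlim

theorem map_eSeq {R' : Type*} [Ring R'] (φ : R →+* R') (x : R) (N : ℕ) :
    φ (eSeq ρ x N) = eSeq (φ.comp ρ) (φ x) N := by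
  simp [eSeq, map_sum, map_mul, map_pow]

theorem map_lSeq {R' : Type*} [Ring R'] (φ : R →+* R') (x : R) (N : ℕ) :
    φ (lSeq ρ x N) = lSeq (φ.comp ρ) (φ x) N := by
  simp [lSeq, map_sum, map_mul, map_pow]


end GRP

/-- let `K ⊇ ℚ` and let `A` be a complete (separated) filtered
`K`-algebra, with complete Hopf structure given by a continuous coproduct
`Δ : A → B` into a complete filtered algebra `B` playing the role of `A ⊗̂ A`,
with the two continuous inclusions `l = (· ⊗̂ 1)` and `r = (1 ⊗̂ ·)` having
commuting images.  Let `η` be a group-like (`Δη = η ⊗̂ η`) invertible element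
with `η − 1 ∈ F₁A`, so that `log η = Σ_{n ≥ 1} (−1)^{n−1}(η−1)ⁿ/n` converges.
Then for every `a ∈ K` the element `η^a := exp(a·log η)` is well defined
(the defining series converge, with unique limits), each `η^a` is group-like,
and `η^a · η^b = η^{a+b}` for all `a, b ∈ K`, with `η^1 = η`. -/
theorem groupLike_real_powers
    {K A B : Type*} [CommRing K] [Algebra ℚ K] [Ring A] [Algebra K A] [Algebra ℚ A]
    [Ring B] [Algebra K B]
    (F : ℕ → Submodule K A) (G : ℕ → Submodule K B)
    (hF0 : F 0 = ⊤) (hFanti : ∀ n, F (n + 1) ≤ F n)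
    (hFmul : ∀ m n : ℕ, ∀ x y : A, x ∈ F m → y ∈ F n → x * y ∈ F (m + n))
    (hFsep : ∀ x : A, (∀ n, x ∈ F n) → x = 0)
    (hFcomplete : ∀ s : ℕ → A, (∀ n, s (n + 1) - s n ∈ F n) →
      ∃ L, IsFilteredLimit F s L)
    (hG0 : G 0 = ⊤) (hGanti : ∀ n, G (n + 1) ≤ G n)
    (hGmul : ∀ m n : ℕ, ∀ x y : B, x ∈ G m → y ∈ G n → x * y ∈ G (m + n))
    (hGsep : ∀ x : B, (∀ n, x ∈ G n) → x = 0)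
    (Δ l r : A →ₐ[K] B)
    (hΔF : ∀ n : ℕ, ∀ x ∈ F n, Δ x ∈ G n)
    (hlF : ∀ n : ℕ, ∀ x ∈ F n, l x ∈ G n)
    (hrF : ∀ n : ℕ, ∀ x ∈ F n, r x ∈ G n)
    (hcomm : ∀ x y : A, l x * r y = r y * l x)
    (η : A) (hηu : IsUnit η) (hη1 : η - 1 ∈ F 1)
    (hηgl : Δ η = l η * r η) :
    ∃ L : A,
      IsFilteredLimit F
        (fun N => ∑ n ∈ Finset.Icc 1 N,
          algebraMap ℚ A ((-1) ^ (n + 1) / n) * (η - 1) ^ n) L ∧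
      ∃ P : K → A,
        (∀ a : K, IsFilteredLimit F
          (fun N => ∑ k ∈ Finset.range (N + 1),
            algebraMap ℚ A (1 / (Nat.factorial k)) * (a • L) ^ k) (P a)) ∧
        (∀ P' : K → A, (∀ a : K, IsFilteredLimit F
          (fun N => ∑ k ∈ Finset.range (N + 1),
            algebraMap ℚ A (1 / (Nat.factorial k)) * (a • L) ^ k) (P' a)) → P' = P) ∧
        (∀ a : K, Δ (P a) = l (P a) * r (P a)) ∧
        (∀ a b : K, P a * P b = P (a + b)) ∧
        P 1 = η := by
  classical
  have hFA : GRP.FD F := ⟨hF0, hFanti, hFmul, hFsep⟩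
  have hGB : GRP.FD G := ⟨hG0, hGanti, hGmul, hGsep⟩
  let ρA : ℚ →+* A := algebraMap ℚ A
  have hqA : ∀ (c : ℚ) (z : A), Commute (ρA c) z := fun c z =>
    Algebra.commute_algebraMap_left c z
  -- the logarithm
  obtain ⟨L, hL⟩ := hFcomplete (GRP.lSeq ρA (η - 1))
    (fun n => hFanti n (hFA.lSeq_diff hη1 n))
  have hL1 : L ∈ F 1 := hFA.lim_lSeq_mem hη1 hL
  -- the exponentials
  choose P hP using fun a : K => hFcomplete (GRP.eSeq ρA (a • L))
    (fun n => hFanti n (hFA.eSeq_diff (Submodule.smul_mem _ a hL1) n))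
  have hPL : IsFilteredLimit F (GRP.eSeq ρA L) (P 1) := by
    have h := hP 1
    rwa [one_smul] at h
  -- η^1 = η
  have hP1 : P 1 = η := by
    have h := hFA.exp_log hη1 (fun c => hqA c _) hL hPL
    rw [h]
    abel
  -- the homomorphism property
  have hmulP : ∀ a b : K, P a * P b = P (a + b) := by
    intro a b
    have hxa : a • L ∈ F 1 := Submodule.smul_mem _ a hL1
    have hxb : b • L ∈ F 1 := Submodule.smul_mem _ b hL1
    have hcomm' : Commute (a • L) (b • L) := by
      show (a • L) * (b • L) = (b • L) * (a • L)
      rw [smul_mul_smul_comm, smul_mul_smul_comm, mul_comm a b]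
    have h := hFA.exp_add_lim hxa hxb hcomm' (fun c => hqA c _) (fun c => hqA c _)
      (hP a) (hP b)
    rw [show a • L + b • L = (a + b) • L from (add_smul a b L).symm] at h
    exact hFA.lim_unique h (hP (a + b))
  -- the coproduct side
  let ρB : ℚ →+* B := (Δ : A →ₐ[K] B).toRingHom.comp ρA
  have hl : ∀ c : ℚ, ρB c = l (algebraMap ℚ A c) := by
    have h : (l.toRingHom.comp ρA : ℚ →+* B) = ρB := Subsingleton.elim _ _
    intro c
    rw [← h]
    rfl
  have hr : ∀ c : ℚ, ρB c = r (algebraMap ℚ A c) := by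
    have h : (r.toRingHom.comp ρA : ℚ →+* B) = ρB := Subsingleton.elim _ _
    intro c
    rw [← h]
    rfl
  have hql : ∀ (c : ℚ) (z : A), Commute (ρB c) (l z) := fun c z => by
    show ρB c * l z = l z * ρB c
    rw [hl c, ← map_mul, ← map_mul, (hqA c z).eq]
  have hqr : ∀ (c : ℚ) (z : A), Commute (ρB c) (r z) := fun c z => by
    show ρB c * r z = r z * ρB c
    rw [hr c, ← map_mul, ← map_mul, (hqA c z).eq]
  have hqΔ : ∀ (c : ℚ) (z : A), Commute (ρB c) (Δ z) := fun c z => by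
    show ρB c * Δ z = Δ z * ρB c
    show Δ (ρA c) * Δ z = Δ z * Δ (ρA c)
    rw [← map_mul, ← map_mul, (hqA c z).eq]
  have hqK : ∀ (c : ℚ) (a : K), Commute (ρB c) (algebraMap K B a) := fun c a =>
    (Algebra.commute_algebraMap_left a _).symm
  -- push the log limit through Δ
  have hΔL : IsFilteredLimit G (GRP.lSeq ρB (Δ η - 1)) (Δ L) := by
    have h := GRP.lim_map (Δ : A →ₐ[K] B).toRingHom hΔF hL
    have e : (fun N => (Δ : A →ₐ[K] B).toRingHom (GRP.lSeq ρA (η - 1) N))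
        = GRP.lSeq ρB (Δ η - 1) := by
      funext N
      rw [GRP.map_lSeq]
      congr 1
      show Δ (η - 1) = Δ η - 1
      rw [map_sub, map_one]
    rwa [e] at h
  -- push the exp limit through l and r
  have hlη : IsFilteredLimit G (GRP.eSeq ρB (l L)) (l η) := by
    have h := GRP.lim_map l.toRingHom hlF hPL
    rw [hP1] at h
    have e : (fun N => l.toRingHom (GRP.eSeq ρA L N)) = GRP.eSeq ρB (l L) := by
      have hhom : (l.toRingHom.comp ρA : ℚ →+* B) = ρB := Subsingleton.elim _ _
      funext N
      rw [GRP.map_eSeq, hhom]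
      rfl
    rwa [e] at h
  have hrη : IsFilteredLimit G (GRP.eSeq ρB (r L)) (r η) := by
    have h := GRP.lim_map r.toRingHom hrF hPL
    rw [hP1] at h
    have e : (fun N => r.toRingHom (GRP.eSeq ρA L N)) = GRP.eSeq ρB (r L) := by
      have hhom : (r.toRingHom.comp ρA : ℚ →+* B) = ρB := Subsingleton.elim _ _
      funext N
      rw [GRP.map_eSeq, hhom]
      rfl
    rwa [e] at h
  have hlL1 : l L ∈ G 1 := hlF 1 L hL1
  have hrL1 : r L ∈ G 1 := hrF 1 L hL1
  have hcomm_lr : Commute (l L) (r L) := hcomm L L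
  have hE : IsFilteredLimit G (GRP.eSeq ρB (l L + r L)) (Δ η) := by
    have h := hGB.exp_add_lim hlL1 hrL1 hcomm_lr (fun c => hql c L) (fun c => hqr c L)
      hlη hrη
    rwa [← hηgl] at h
  -- primitivity of the logarithm
  have hprim : Δ L = l L + r L := by
    have hy1 : l L + r L ∈ G 1 := add_mem hlL1 hrL1
    have hqy : ∀ c : ℚ, Commute (ρB c) (l L + r L) := fun c =>
      (hql c L).add_right (hqr c L)
    exact hGB.log_exp hy1 hqy hE hΔL
  -- group-likeness
  have hgl : ∀ a : K, Δ (P a) = l (P a) * r (P a) := by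
    intro a
    have h1 : IsFilteredLimit G (GRP.eSeq ρB (a • Δ L)) (Δ (P a)) := by
      have h := GRP.lim_map (Δ : A →ₐ[K] B).toRingHom hΔF (hP a)
      have e : (fun N => (Δ : A →ₐ[K] B).toRingHom (GRP.eSeq ρA (a • L) N))
          = GRP.eSeq ρB (a • Δ L) := by
        funext N
        rw [GRP.map_eSeq]
        congr 1
        show Δ (a • L) = a • Δ L
        rw [map_smul]
      rwa [e] at h
    have hlPa : IsFilteredLimit G (GRP.eSeq ρB (a • l L)) (l (P a)) := by
      have h := GRP.lim_map l.toRingHom hlF (hP a)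
      have e : (fun N => l.toRingHom (GRP.eSeq ρA (a • L) N))
          = GRP.eSeq ρB (a • l L) := by
        have hhom : (l.toRingHom.comp ρA : ℚ →+* B) = ρB := Subsingleton.elim _ _
        funext N
        rw [GRP.map_eSeq, hhom]
        congr 1
        show l (a • L) = a • l L
        rw [map_smul]
      rwa [e] at h
    have hrPa : IsFilteredLimit G (GRP.eSeq ρB (a • r L)) (r (P a)) := by
      have h := GRP.lim_map r.toRingHom hrF (hP a)
      have e : (fun N => r.toRingHom (GRP.eSeq ρA (a • L) N))
          = GRP.eSeq ρB (a • r L) := by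
        have hhom : (r.toRingHom.comp ρA : ℚ →+* B) = ρB := Subsingleton.elim _ _
        funext N
        rw [GRP.map_eSeq, hhom]
        congr 1
        show r (a • L) = a • r L
        rw [map_smul]
      rwa [e] at h
    have hxa : a • l L ∈ G 1 := Submodule.smul_mem _ _ hlL1
    have hya : a • r L ∈ G 1 := Submodule.smul_mem _ _ hrL1
    have hc1 : Commute (a • l L) (a • r L) := by
      show (a • l L) * (a • r L) = (a • r L) * (a • l L)
      rw [smul_mul_smul_comm, smul_mul_smul_comm, mul_comm a a, hcomm_lr.eq]
    have hqx : ∀ c : ℚ, Commute (ρB c) (a • l L) := fun c => by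
      rw [Algebra.smul_def]
      exact (hqK c a).mul_right (hql c L)
    have hqy' : ∀ c : ℚ, Commute (ρB c) (a • r L) := fun c => by
      rw [Algebra.smul_def]
      exact (hqK c a).mul_right (hqr c L)
    have h := hGB.exp_add_lim hxa hya hc1 hqx hqy' hlPa hrPa
    rw [show a • l L + a • r L = a • Δ L from by rw [hprim, smul_add]] at h
    exact hGB.lim_unique h1 h
  refine ⟨L, hL, P, hP, ?_, hgl, hmulP, hP1⟩
  intro P' hP'
  funext a
  exact hFA.lim_unique (hP' a) (hP a)
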